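/- Correctness of the proposed generalized secret sharing scheme: let 𝒜 be a monotone (upward-closed) family of subsets of a finite participant set 𝒫, let B₁, …, B_m be the maximal elements of 𝒜ᶜ = 2^𝒫 \ 𝒜, and let s₁, …, s_m be bit strings of a fixed length b whose bitwise XOR equals the secret K (an (m,m) XOR scheme). Participant P receives share s_j exactly when P ∉ B_j. Then for every authorized set X ∈ 𝒜, the set of indices J(X) = { j : ∃ P ∈ X, P ∉ B_j } of shares jointly held by X equals {1, …, m}, and therefore the bitwise XOR of the shares { s_j : j ∈ J(X) } equals K; and for every unauthorized set X ∉ 𝒜 there exists an index j with X ⊆ B_j, so no participant of X holds s_j. -/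

import Mathlib

lemma exists_maximal_unauth {P : Type*} [Fintype P] [DecidableEq P] (𝒜 : Set (Finset P))
    (C : Finset P) (hC : C ∉ 𝒜) :
    ∃ D : Finset P, C ⊆ D ∧ D ∉ 𝒜 ∧ ∀ C' : Finset P, C' ∉ 𝒜 → D ⊆ C' → C' = D := by
  by_cases h : ∀ C' : Finset P, C' ∉ 𝒜 → C ⊆ C' → C' = C
  · exact ⟨C, subset_rfl, hC, h⟩
  · push_neg at h
    obtain ⟨C', hC', hCC', hne⟩ := h
    have hlt : C.card < C'.card := Finset.card_lt_card (Finset.ssubset_iff_subset_ne.mpr ⟨hCC', fun h => hne h.symm⟩)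
    obtain ⟨D, hD1, hD2, hD3⟩ := exists_maximal_unauth 𝒜 C' hC'
    exact ⟨D, hCC'.trans hD1, hD2, hD3⟩
termination_by Fintype.card P - C.card
decreasing_by
  have := Finset.card_le_univ C'
  omega

/-- Correctness of the proposed generalized secret sharing scheme: let `𝒜` be a
monotone access structure over a finite participant set, let `B 1, …, B m` be
the maximal unauthorized sets (maximal elements of the complement of `𝒜`), and
let `s 1, …, s m` be bit strings of length `b` (bits in `ZMod 2`, XOR being
addition) whose XOR is the secret `K`.  Participant `p` holds share `s j` iff
`p ∉ B j`.  Then every authorized set `X ∈ 𝒜` jointly holds all `m` shares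
(its index set `J(X) = {j | ∃ p ∈ X, p ∉ B j}` is everything) and the XOR of
the shares it holds is `K`, while every unauthorized set `X ∉ 𝒜` is contained
in some `B j`, so none of its members holds `s j`. -/
theorem generalized_pob_scheme_correctness
    {P : Type*} [Fintype P] [DecidableEq P] (𝒜 : Set (Finset P))
    (hmono : ∀ A₁ A₂ : Finset P, A₁ ∈ 𝒜 → A₁ ⊆ A₂ → A₂ ∈ 𝒜)
    (m : ℕ) (B : Fin m → Finset P)
    (hBmax : ∀ j : Fin m, B j ∉ 𝒜 ∧ ∀ C : Finset P, C ∉ 𝒜 → B j ⊆ C → C = B j)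
    (hBall : ∀ C : Finset P, C ∉ 𝒜 → (∀ C' : Finset P, C' ∉ 𝒜 → C ⊆ C' → C' = C) →
      ∃ j : Fin m, B j = C)
    (b : ℕ) (s : Fin m → Fin b → ZMod 2) (K : Fin b → ZMod 2)
    (hK : ∀ i : Fin b, ∑ j : Fin m, s j i = K i) :
    (∀ X : Finset P, X ∈ 𝒜 →
      (Finset.univ.filter (fun j : Fin m => ∃ p ∈ X, p ∉ B j)) = Finset.univ ∧
      ∀ i : Fin b,
        ∑ j ∈ Finset.univ.filter (fun j : Fin m => ∃ p ∈ X, p ∉ B j), s j i = K i) ∧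
    (∀ X : Finset P, X ∉ 𝒜 → ∃ j : Fin m, X ⊆ B j) := by

  have aux : ∀ X : Finset P, X ∉ 𝒜 → ∃ j : Fin m, X ⊆ B j := by
    intro X hX
    obtain ⟨D, hXD, hD, hDmax⟩ := exists_maximal_unauth 𝒜 X hX
    obtain ⟨j, hj⟩ := hBall D hD hDmax
    exact ⟨j, hj ▸ hXD⟩
  refine ⟨fun X hX => ?_, aux⟩
  have hfull : (Finset.univ.filter (fun j : Fin m => ∃ p ∈ X, p ∉ B j)) = Finset.univ := by
    ext j
    simp only [Finset.mem_filter, Finset.mem_univ, true_and, iff_true]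
    by_contra h
    push_neg at h
    have hsub : X ⊆ B j := fun p hp => h p hp
    exact (hBmax j).1 (hmono X (B j) hX hsub)
  exact ⟨hfull, fun i => by rw [hfull]; exact hK i⟩
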